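/- The graph H obtained by taking m copies of K_{δ+1} labeled X_1,…,X_m and two copies of K_{δ+2} labeled X_0, X_{m+1}, joining x_{i,2} to x_{i+1,1} for i = 0,…,m, and deleting the edges x_{i,1}x_{i,2} for i = 0,…,m+1, is a connected graph on n = (m+2)(δ+1) + 2 vertices with minimum degree δ and diameter 3n/(δ+1) − (δ+7)/(δ+1). -/

import Mathlib

/-- The vertex set of the Caro et al. construction: copies `X_0, …, X_{m+1}`, where the middle
copies `X_1, …, X_m` have `δ+1` vertices (second coordinate at most `δ`) and the two end copies
`X_0`, `X_{m+1}` have `δ+2` vertices. The vertex `x_{i,j}` corresponds to the pair with first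
coordinate `i` and second coordinate `j - 1`. -/
def caroVert (m δ : ℕ) : Type :=
  {p : Fin (m + 2) × Fin (δ + 2) // p.1.val = 0 ∨ p.1.val = m + 1 ∨ p.2.val ≤ δ}

instance (m δ : ℕ) : Fintype (caroVert m δ) := by
  unfold caroVert; infer_instance

/-- The base relation: complete within each copy except the deleted edge `x_{i,1}x_{i,2}`,
together with the connecting edges `x_{i,2}x_{i+1,1}`. -/
def caroRel (m δ : ℕ) (a b : caroVert m δ) : Prop :=
  (a.1.1 = b.1.1 ∧ ¬(a.1.2.val = 0 ∧ b.1.2.val = 1) ∧ ¬(a.1.2.val = 1 ∧ b.1.2.val = 0)) ∨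
  (b.1.1.val = a.1.1.val + 1 ∧ a.1.2.val = 1 ∧ b.1.2.val = 0)

/-- The graph `H` of the construction. -/
def caroGraph (m δ : ℕ) : SimpleGraph (caroVert m δ) :=
  SimpleGraph.fromRel (caroRel m δ)

namespace CaroAux
open SimpleGraph
variable {m δ : ℕ}

lemma vert_ext {a b : caroVert m δ} (h1 : a.1.1.val = b.1.1.val) (h2 : a.1.2.val = b.1.2.val) :
    a = b := by
  apply Subtype.ext
  exact Prod.ext (Fin.ext h1) (Fin.ext h2)

lemma adj_iff {a b : caroVert m δ} :
    (caroGraph m δ).Adj a b ↔ a ≠ b ∧ (caroRel m δ a b ∨ caroRel m δ b a) :=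
  SimpleGraph.fromRel_adj _ a b

lemma adj_same {a b : caroVert m δ} (hi : a.1.1.val = b.1.1.val) (hj : a.1.2.val ≠ b.1.2.val)
    (h1 : ¬(a.1.2.val = 0 ∧ b.1.2.val = 1)) (h2 : ¬(a.1.2.val = 1 ∧ b.1.2.val = 0)) :
    (caroGraph m δ).Adj a b := by
  rw [adj_iff]
  exact ⟨fun h => hj (by rw [h]), Or.inl (Or.inl ⟨Fin.ext hi, h1, h2⟩)⟩

lemma adj_cross {a b : caroVert m δ} (hi : b.1.1.val = a.1.1.val + 1)
    (ha : a.1.2.val = 1) (hb : b.1.2.val = 0) : (caroGraph m δ).Adj a b := by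
  rw [adj_iff]
  exact ⟨fun h => by rw [h] at hi; omega, Or.inl (Or.inr ⟨hi, ha, hb⟩)⟩

def pot (v : caroVert m δ) : ℕ :=
  3 * v.1.1.val + (if v.1.2.val = 0 then 0 else if v.1.2.val = 1 then 2 else 1)

lemma pot_le_of_adj {a b : caroVert m δ} (h : (caroGraph m δ).Adj a b) :
    pot b ≤ pot a + 1 := by
  rw [adj_iff] at h
  obtain ⟨-, h⟩ := h
  unfold pot
  rcases h with (⟨hi, h1, h2⟩ | ⟨hi, h1, h2⟩) | (⟨hi, h1, h2⟩ | ⟨hi, h1, h2⟩) <;>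
    first
      | (have hv : a.1.1.val = b.1.1.val := congrArg Fin.val hi; split_ifs <;> omega)
      | (split_ifs <;> omega)

lemma pot_le_walk {a b : caroVert m δ} (p : (caroGraph m δ).Walk a b) :
    pot b ≤ pot a + p.length := by
  induction p with
  | nil => simp
  | cons h p ih =>
    have := pot_le_of_adj h
    rw [SimpleGraph.Walk.length_cons]
    omega

end CaroAux

namespace CaroAux
open SimpleGraph
variable {m δ : ℕ}

lemma edist_adj {a b : caroVert m δ} (h : (caroGraph m δ).Adj a b) :
    (caroGraph m δ).edist a b ≤ 1 :=
  (SimpleGraph.edist_eq_one_iff_adj.mpr h).le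

lemma edist_same (hδ : 3 ≤ δ) {a b : caroVert m δ} (hi : a.1.1.val = b.1.1.val) :
    (caroGraph m δ).edist a b ≤ 2 := by
  by_cases hj : a.1.2.val = b.1.2.val
  · rw [vert_ext hi hj, SimpleGraph.edist_self]; norm_num
  · by_cases h01 : (a.1.2.val = 0 ∧ b.1.2.val = 1) ∨ (a.1.2.val = 1 ∧ b.1.2.val = 0)
    · have hc2 : (2 : ℕ) < δ + 2 := by omega
      let c : caroVert m δ := ⟨(a.1.1, ⟨2, hc2⟩), Or.inr (Or.inr (show (2:ℕ) ≤ δ by omega))⟩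
      have hcj : c.1.2.val = 2 := rfl
      have hci : c.1.1.val = a.1.1.val := rfl
      have h1 : (caroGraph m δ).Adj a c := adj_same rfl (by omega) (by omega) (by omega)
      have h2 : (caroGraph m δ).Adj c b := adj_same (by omega) (by omega) (by omega) (by omega)
      calc (caroGraph m δ).edist a b ≤ _ + _ := (caroGraph m δ).edist_triangle (v := c)
        _ ≤ 1 + 1 := add_le_add (edist_adj h1) (edist_adj h2)
        _ = 2 := by norm_num
    · push_neg at h01
      have := adj_same hi hj (fun h => h01.1 h.1 h.2) (fun h => h01.2 h.1 h.2)
      exact (edist_adj this).trans (by norm_num)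

end CaroAux

namespace CaroAux
open SimpleGraph
variable {m δ : ℕ}

lemma edist_spine (hδ : 3 ≤ δ) : ∀ d, 1 ≤ d → ∀ a b : caroVert m δ,
    b.1.1.val = a.1.1.val + d → a.1.2.val = 1 → b.1.2.val = 0 →
    (caroGraph m δ).edist a b ≤ ((3 * d - 2 : ℕ) : ℕ∞) := by
  intro d
  induction d with
  | zero => omega
  | succ d ih =>
    intro _ a b hib ha hb
    by_cases hd : d = 0
    · subst hd
      have : (caroGraph m δ).Adj a b := adj_cross (by omega) ha hb
      exact (edist_adj this).trans (by norm_num)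
    · have hlt : a.1.1.val + d < m + 2 := by have := b.1.1.isLt; omega
      let c1 : caroVert m δ :=
        ⟨(⟨a.1.1.val + d, hlt⟩, ⟨0, by omega⟩), Or.inr (Or.inr (show (0:ℕ) ≤ δ by omega))⟩
      let c2 : caroVert m δ :=
        ⟨(⟨a.1.1.val + d, hlt⟩, ⟨1, by omega⟩), Or.inr (Or.inr (show (1:ℕ) ≤ δ by omega))⟩
      have h1 : (caroGraph m δ).edist a c1 ≤ ((3 * d - 2 : ℕ) : ℕ∞) :=
        ih (by omega) a c1 rfl ha rfl
      have h2 : (caroGraph m δ).edist c1 c2 ≤ 2 := edist_same hδ rfl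
      have h3 : (caroGraph m δ).Adj c2 b := adj_cross (by show b.1.1.val = a.1.1.val + d + 1; omega) rfl hb
      calc (caroGraph m δ).edist a b
          ≤ (caroGraph m δ).edist a c1 + (caroGraph m δ).edist c1 b :=
            (caroGraph m δ).edist_triangle
        _ ≤ (caroGraph m δ).edist a c1 +
              ((caroGraph m δ).edist c1 c2 + (caroGraph m δ).edist c2 b) :=
            add_le_add (le_refl _) ((caroGraph m δ).edist_triangle)
        _ ≤ ((3 * d - 2 : ℕ) : ℕ∞) + (2 + 1) :=
            add_le_add h1 (add_le_add h2 (edist_adj h3))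
        _ = ((3 * (d + 1) - 2 : ℕ) : ℕ∞) := by
            have : ((2 : ℕ∞) + 1) = ((3 : ℕ) : ℕ∞) := by norm_num
            rw [this, ← Nat.cast_add, Nat.cast_inj]
            omega

lemma edist_global (hδ : 3 ≤ δ) (a b : caroVert m δ) :
    (caroGraph m δ).edist a b ≤ ((3 * m + 5 : ℕ) : ℕ∞) := by
  wlog hab : a.1.1.val ≤ b.1.1.val with H
  · rw [SimpleGraph.edist_comm]; exact H hδ b a (by omega)
  rcases eq_or_lt_of_le hab with heq | hlt
  · exact (edist_same hδ heq).trans (by norm_cast; omega)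
  · let c1 : caroVert m δ :=
      ⟨(a.1.1, ⟨1, by omega⟩), Or.inr (Or.inr (show (1:ℕ) ≤ δ by omega))⟩
    let c2 : caroVert m δ :=
      ⟨(b.1.1, ⟨0, by omega⟩), Or.inr (Or.inr (show (0:ℕ) ≤ δ by omega))⟩
    have h1 : (caroGraph m δ).edist a c1 ≤ 2 := edist_same hδ rfl
    have h2 : (caroGraph m δ).edist c1 c2 ≤ ((3 * (b.1.1.val - a.1.1.val) - 2 : ℕ) : ℕ∞) :=
      edist_spine hδ _ (by omega) c1 c2 (by show b.1.1.val = a.1.1.val + (b.1.1.val - a.1.1.val); omega) rfl rfl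
    have h3 : (caroGraph m δ).edist c2 b ≤ 2 := edist_same hδ rfl
    have hdle : b.1.1.val - a.1.1.val ≤ m + 1 := by have := b.1.1.isLt; omega
    calc (caroGraph m δ).edist a b
        ≤ (caroGraph m δ).edist a c1 + (caroGraph m δ).edist c1 b :=
          (caroGraph m δ).edist_triangle
      _ ≤ (caroGraph m δ).edist a c1 +
            ((caroGraph m δ).edist c1 c2 + (caroGraph m δ).edist c2 b) :=
          add_le_add (le_refl _) ((caroGraph m δ).edist_triangle)
      _ ≤ 2 + (((3 * (b.1.1.val - a.1.1.val) - 2 : ℕ) : ℕ∞) + 2) := add_le_add h1 (add_le_add h2 h3)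
      _ ≤ ((3 * m + 5 : ℕ) : ℕ∞) := by
          have h2' : (2 : ℕ∞) = ((2 : ℕ) : ℕ∞) := by norm_num
          rw [h2', ← Nat.cast_add, ← Nat.cast_add, Nat.cast_le]
          omega

end CaroAux

namespace CaroAux
open SimpleGraph
variable {m δ : ℕ}

def vA (m δ : ℕ) : caroVert m δ :=
  ⟨(⟨0, by omega⟩, ⟨0, by omega⟩), Or.inl rfl⟩

def vB (m δ : ℕ) : caroVert m δ :=
  ⟨(⟨m + 1, by omega⟩, ⟨1, by omega⟩), Or.inr (Or.inl rfl)⟩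

lemma edist_lower : ((3 * m + 5 : ℕ) : ℕ∞) ≤ (caroGraph m δ).edist (vA m δ) (vB m δ) := by
  rw [SimpleGraph.edist_eq_sInf]
  apply le_sInf
  rintro x ⟨w, rfl⟩
  have hw := pot_le_walk w
  have hA : pot (vA m δ) = 0 := rfl
  have hB : pot (vB m δ) = 3 * (m + 1) + 2 := rfl
  rw [Nat.cast_le]
  omega

lemma ediam_eq (hδ : 3 ≤ δ) : (caroGraph m δ).ediam = ((3 * m + 5 : ℕ) : ℕ∞) :=
  le_antisymm (SimpleGraph.ediam_le_of_edist_le fun a b => edist_global hδ a b)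
    (le_trans edist_lower SimpleGraph.edist_le_ediam)

lemma diam_eq (hδ : 3 ≤ δ) : (caroGraph m δ).diam = 3 * m + 5 := by
  rw [SimpleGraph.diam, ediam_eq hδ, ENat.toNat_coe]

lemma connected (hδ : 3 ≤ δ) : (caroGraph m δ).Connected := by
  have : Nonempty (caroVert m δ) := ⟨vA m δ⟩
  refine ⟨fun a b => ?_⟩
  apply SimpleGraph.reachable_of_edist_ne_top
  exact ((edist_global hδ a b).trans_lt (lt_top_iff_ne_top.mpr (ENat.coe_ne_top _))).ne

end CaroAux

namespace CaroAux
open SimpleGraph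
variable {m δ : ℕ}

lemma ncard_ge_of_inj {α : Type*} {k : ℕ} {s : Set α} (f : Fin k → α)
    (hf : Function.Injective f) (hr : ∀ i, f i ∈ s) (hs : s.Finite) : k ≤ s.ncard := by
  have h1 := Set.ncard_le_ncard (Set.range_subset_iff.mpr hr) hs
  rwa [← Nat.card_coe_set_eq, Nat.card_range_of_injective hf, Nat.card_eq_fintype_card,
    Fintype.card_fin] at h1

lemma min_degree (hm : 1 ≤ m) (hδ : 3 ≤ δ) (v : caroVert m δ) :
    δ ≤ ((caroGraph m δ).neighborSet v).ncard := by
  obtain ⟨⟨⟨i, hi⟩, ⟨j, hj⟩⟩, hv⟩ := v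
  rcases le_or_gt 2 j with hj2 | hj2
  · -- j ≥ 2 : all other in-copy vertices with index ≤ δ
    refine ncard_ge_of_inj
      (fun k => ⟨(⟨i, hi⟩, ⟨if k.val < min j δ then k.val else k.val + 1,
          by have := k.isLt; split <;> omega⟩),
        Or.inr (Or.inr (show (if k.val < min j δ then k.val else k.val + 1) ≤ δ by
          have := k.isLt; split <;> omega))⟩)
      ?_ ?_ (Set.toFinite _)
    · intro k k' hkk
      have h2 : (if k.val < min j δ then k.val else k.val + 1)
          = (if k'.val < min j δ then k'.val else k'.val + 1) :=
        congrArg (fun w : caroVert m δ => w.1.2.val) hkk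
      have := k.isLt; have := k'.isLt
      apply Fin.ext
      split_ifs at h2 <;> omega
    · intro k
      refine (SimpleGraph.mem_neighborSet _ _ _).mpr ?_
      have := k.isLt
      exact adj_same rfl
        (show j ≠ (if k.val < min j δ then k.val else k.val + 1) by split <;> omega)
        (show ¬(j = 0 ∧ _ = 1) by omega)
        (show ¬(j = 1 ∧ _ = 0) by omega)
  · -- j = 0 or j = 1
    interval_cases j
    · -- j = 0
      by_cases hi0 : i = 0
      · refine ncard_ge_of_inj
          (fun k => ⟨(⟨i, hi⟩, ⟨k.val + 2, by have := k.isLt; omega⟩), Or.inl hi0⟩)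
          ?_ ?_ (Set.toFinite _)
        · intro k k' hkk
          have h2 : k.val + 2 = k'.val + 2 :=
            congrArg (fun w : caroVert m δ => w.1.2.val) hkk
          exact Fin.ext (by omega)
        · intro k
          refine (SimpleGraph.mem_neighborSet _ _ _).mpr ?_
          exact adj_same rfl (show (0:ℕ) ≠ k.val + 2 by omega)
            (show ¬((0:ℕ) = 0 ∧ k.val + 2 = 1) by omega)
            (show ¬((0:ℕ) = 1 ∧ k.val + 2 = 0) by omega)
      · refine ncard_ge_of_inj
          (fun k => ⟨(⟨if k.val < δ - 1 then i else i - 1, by split <;> omega⟩,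
              ⟨if k.val < δ - 1 then k.val + 2 else 1, by have := k.isLt; split <;> omega⟩),
            Or.inr (Or.inr (show (if k.val < δ - 1 then k.val + 2 else 1) ≤ δ by
              have := k.isLt; split <;> omega))⟩)
          ?_ ?_ (Set.toFinite _)
        · intro k k' hkk
          have h1 : (if k.val < δ - 1 then i else i - 1)
              = (if k'.val < δ - 1 then i else i - 1) :=
            congrArg (fun w : caroVert m δ => w.1.1.val) hkk
          have h2 : (if k.val < δ - 1 then k.val + 2 else 1)
              = (if k'.val < δ - 1 then k'.val + 2 else 1) :=
            congrArg (fun w : caroVert m δ => w.1.2.val) hkk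
          have := k.isLt; have := k'.isLt
          apply Fin.ext
          split_ifs at h2 <;> split_ifs at h1 <;> omega
        · intro k
          refine (SimpleGraph.mem_neighborSet _ _ _).mpr ?_
          by_cases hk : k.val < δ - 1
          · exact adj_same (show i = (if k.val < δ - 1 then i else i - 1) by rw [if_pos hk])
              (show (0:ℕ) ≠ (if k.val < δ - 1 then k.val + 2 else 1) by rw [if_pos hk]; omega)
              (show ¬((0:ℕ) = 0 ∧ (if k.val < δ - 1 then k.val + 2 else 1) = 1) by
                rw [if_pos hk]; omega)
              (show ¬((0:ℕ) = 1 ∧ _ = 0) by omega)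
          · exact (adj_cross
              (show i = (if k.val < δ - 1 then i else i - 1) + 1 by rw [if_neg hk]; omega)
              (show (if k.val < δ - 1 then k.val + 2 else 1) = 1 by rw [if_neg hk])
              rfl).symm
    · -- j = 1
      by_cases him : i = m + 1
      · refine ncard_ge_of_inj
          (fun k => ⟨(⟨i, hi⟩, ⟨k.val + 2, by have := k.isLt; omega⟩), Or.inr (Or.inl him)⟩)
          ?_ ?_ (Set.toFinite _)
        · intro k k' hkk
          have h2 : k.val + 2 = k'.val + 2 :=
            congrArg (fun w : caroVert m δ => w.1.2.val) hkk
          exact Fin.ext (by omega)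
        · intro k
          refine (SimpleGraph.mem_neighborSet _ _ _).mpr ?_
          exact adj_same rfl (show (1:ℕ) ≠ k.val + 2 by omega)
            (show ¬((1:ℕ) = 0 ∧ k.val + 2 = 1) by omega)
            (show ¬((1:ℕ) = 1 ∧ k.val + 2 = 0) by omega)
      · refine ncard_ge_of_inj
          (fun k => ⟨(⟨if k.val < δ - 1 then i else i + 1, by split <;> omega⟩,
              ⟨if k.val < δ - 1 then k.val + 2 else 0, by have := k.isLt; split <;> omega⟩),
            Or.inr (Or.inr (show (if k.val < δ - 1 then k.val + 2 else 0) ≤ δ by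
              have := k.isLt; split <;> omega))⟩)
          ?_ ?_ (Set.toFinite _)
        · intro k k' hkk
          have h1 : (if k.val < δ - 1 then i else i + 1)
              = (if k'.val < δ - 1 then i else i + 1) :=
            congrArg (fun w : caroVert m δ => w.1.1.val) hkk
          have h2 : (if k.val < δ - 1 then k.val + 2 else 0)
              = (if k'.val < δ - 1 then k'.val + 2 else 0) :=
            congrArg (fun w : caroVert m δ => w.1.2.val) hkk
          have := k.isLt; have := k'.isLt
          apply Fin.ext
          split_ifs at h2 <;> split_ifs at h1 <;> omega
        · intro k
          refine (SimpleGraph.mem_neighborSet _ _ _).mpr ?_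
          by_cases hk : k.val < δ - 1
          · exact adj_same (show i = (if k.val < δ - 1 then i else i + 1) by rw [if_pos hk])
              (show (1:ℕ) ≠ (if k.val < δ - 1 then k.val + 2 else 0) by rw [if_pos hk]; omega)
              (show ¬((1:ℕ) = 0 ∧ _ = 1) by omega)
              (show ¬((1:ℕ) = 1 ∧ (if k.val < δ - 1 then k.val + 2 else 0) = 0) by
                rw [if_pos hk]; omega)
          · exact adj_cross
              (show (if k.val < δ - 1 then i else i + 1) = i + 1 by rw [if_neg hk])
              rfl
              (show (if k.val < δ - 1 then k.val + 2 else 0) = 0 by rw [if_neg hk])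

end CaroAux

namespace CaroAux
open SimpleGraph
variable {m δ : ℕ}

lemma exists_min_degree (hδ : 3 ≤ δ) :
    ∃ v : caroVert m δ, ((caroGraph m δ).neighborSet v).ncard = δ := by
  refine ⟨vA m δ, ?_⟩
  have hf : ∀ k : Fin δ, (k.val + 2) < δ + 2 := fun k => by have := k.isLt; omega
  set f : Fin δ → caroVert m δ :=
    fun k => ⟨(⟨0, by omega⟩, ⟨k.val + 2, hf k⟩), Or.inl rfl⟩ with hfdef
  have hinj : Function.Injective f := by
    intro k k' hkk
    have h2 : k.val + 2 = k'.val + 2 :=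
      congrArg (fun w : caroVert m δ => w.1.2.val) hkk
    exact Fin.ext (by omega)
  have hset : (caroGraph m δ).neighborSet (vA m δ) = Set.range f := by
    ext w
    simp only [SimpleGraph.mem_neighborSet, Set.mem_range]
    constructor
    · intro hadj
      rw [adj_iff] at hadj
      obtain ⟨hne, hrel⟩ := hadj
      have hwj : w.1.2.val ≠ 1 ∧ w.1.1.val = 0 := by
        rcases hrel with (⟨h1, h2, h3⟩ | ⟨h1, h2, h3⟩) | (⟨h1, h2, h3⟩ | ⟨h1, h2, h3⟩)
        · have hv : (vA m δ).1.1.val = w.1.1.val := congrArg Fin.val h1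
          have h0 : (vA m δ).1.2.val = 0 := rfl
          exact ⟨fun hw => h2 ⟨h0, hw⟩, by rw [← hv]; rfl⟩
        · have h2' : (0:ℕ) = 1 := h2
          omega
        · have hv : w.1.1.val = (vA m δ).1.1.val := congrArg Fin.val h1
          have h0 : (vA m δ).1.2.val = 0 := rfl
          refine ⟨fun hw => h3 ⟨hw, h0⟩, by rw [hv]; rfl⟩
        · have h1' : (0:ℕ) = w.1.1.val + 1 := h1
          omega
      have hwj0 : w.1.2.val ≠ 0 := by
        intro h0
        exact hne (vert_ext (by rw [hwj.2]; rfl) (by rw [h0]; rfl)).symm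
      have hlt := w.1.2.isLt
      refine ⟨⟨w.1.2.val - 2, by omega⟩, ?_⟩
      exact vert_ext (by simpa [hfdef] using hwj.2.symm) (by simp [hfdef]; omega)
    · rintro ⟨k, rfl⟩
      exact adj_same (show (0:ℕ) = 0 from rfl) (show (0:ℕ) ≠ k.val + 2 by omega)
        (show ¬((0:ℕ) = 0 ∧ k.val + 2 = 1) by omega)
        (show ¬((0:ℕ) = 1 ∧ k.val + 2 = 0) by omega)
  rw [hset, ← Nat.card_coe_set_eq, Nat.card_range_of_injective hinj,
    Nat.card_eq_fintype_card, Fintype.card_fin]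

end CaroAux

namespace CaroAux
open SimpleGraph
variable {m δ : ℕ}

lemma card_vert (m δ : ℕ) : Fintype.card (caroVert m δ) = (m + 2) * (δ + 1) + 2 := by
  have e : caroVert m δ ≃
      Σ i : Fin (m + 2), {j : Fin (δ + 2) // i.val = 0 ∨ i.val = m + 1 ∨ j.val ≤ δ} := by
    unfold caroVert
    exact Equiv.subtypeProdEquivSigmaSubtype
      (fun (i : Fin (m + 2)) (j : Fin (δ + 2)) => i.val = 0 ∨ i.val = m + 1 ∨ j.val ≤ δ)
  rw [Fintype.card_congr e, Fintype.card_sigma]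
  have hcard : ∀ i : Fin (m + 2),
      Fintype.card {j : Fin (δ + 2) // i.val = 0 ∨ i.val = m + 1 ∨ j.val ≤ δ}
        = (δ + 1) + (if i.val = 0 ∨ i.val = m + 1 then 1 else 0) := by
    intro i
    by_cases h : i.val = 0 ∨ i.val = m + 1
    · rw [if_pos h]
      have e2 : {j : Fin (δ + 2) // i.val = 0 ∨ i.val = m + 1 ∨ j.val ≤ δ} ≃ Fin (δ + 2) :=
        Equiv.subtypeUnivEquiv (fun j => h.elim Or.inl (fun h' => Or.inr (Or.inl h')))
      rw [Fintype.card_congr e2, Fintype.card_fin]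
    · rw [if_neg h]
      push_neg at h
      have e2 : {j : Fin (δ + 2) // i.val = 0 ∨ i.val = m + 1 ∨ j.val ≤ δ} ≃ Fin (δ + 1) := by
        refine ⟨fun j => ⟨j.1.val, ?_⟩, fun j => ⟨⟨j.val, by omega⟩, Or.inr (Or.inr (show j.val ≤ δ by
          have := j.isLt; omega))⟩, fun j => Subtype.ext (Fin.ext rfl), fun j => Fin.ext rfl⟩
        rcases j.2 with h' | h' | h'
        · exact absurd h' h.1
        · exact absurd h' h.2
        · omega
      rw [Fintype.card_congr e2, Fintype.card_fin]
  rw [Finset.sum_congr rfl (fun i _ => hcard i), Finset.sum_add_distrib, Finset.sum_const,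
    Finset.card_univ, Fintype.card_fin, ← Finset.card_filter]
  have hfilt : (Finset.univ.filter (fun i : Fin (m + 2) => i.val = 0 ∨ i.val = m + 1))
      = {⟨0, by omega⟩, ⟨m + 1, by omega⟩} := by
    ext i
    simp only [Finset.mem_filter, Finset.mem_univ, true_and, Finset.mem_insert,
      Finset.mem_singleton, Fin.ext_iff]
  rw [hfilt, Finset.card_insert_of_notMem (by simp [Fin.ext_iff]), Finset.card_singleton]
  ring

end CaroAux

theorem stmt_17 (m δ : ℕ) (hm : 1 ≤ m) (hδ : 3 ≤ δ) :
    Fintype.card (caroVert m δ) = (m + 2) * (δ + 1) + 2 ∧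
    (caroGraph m δ).Connected ∧
    (∀ v : caroVert m δ, δ ≤ ((caroGraph m δ).neighborSet v).ncard) ∧
    (∃ v : caroVert m δ, ((caroGraph m δ).neighborSet v).ncard = δ) ∧
    ((caroGraph m δ).diam : ℝ) =
      3 * (((m + 2) * (δ + 1) + 2 : ℕ) : ℝ) / (δ + 1) - ((δ : ℝ) + 7) / (δ + 1) := by
  refine ⟨CaroAux.card_vert m δ, CaroAux.connected hδ, CaroAux.min_degree hm hδ,
    CaroAux.exists_min_degree hδ, ?_⟩
  rw [CaroAux.diam_eq hδ]
  have h1 : (δ : ℝ) + 1 ≠ 0 := by positivity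
  field_simp
  push_cast
  ring
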